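/- Let A be a set of positive integers and let γ be any element of Γ_A other than the identity, with entries γ = [[a,b],[c,d]]. Then 1 ≤ a, a ≤ min(b,c), min(b,c) ≤ max(b,c), and max(b,c) < d. -/

import Mathlib

/-- The generator matrix `[[0,1],[1,a]]`. -/
def cfGen (a : ℕ) : Matrix (Fin 2) (Fin 2) ℤ := !![0, 1; 1, (a : ℤ)]

/-- The determinant-one semigroup `Γ_A`: all nonempty finite products of the
generators `[[0,1],[1,a]]·[[0,1],[1,a']]` with `a, a' ∈ A`. -/
def GammaSemigroup (A : Set ℕ) : Set (Matrix (Fin 2) (Fin 2) ℤ) :=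
  { M | ∃ l : List (ℕ × ℕ), l ≠ [] ∧ (∀ p ∈ l, p.1 ∈ A ∧ p.2 ∈ A) ∧
      M = (l.map (fun p => cfGen p.1 * cfGen p.2)).prod }

/-- The invariant satisfied by every nonempty product. -/
def GoodMat (M : Matrix (Fin 2) (Fin 2) ℤ) : Prop :=
  1 ≤ M 0 0 ∧ M 0 0 ≤ M 0 1 ∧ M 0 0 ≤ M 1 0 ∧ M 0 1 < M 1 1 ∧ M 1 0 < M 1 1

lemma good_gen {a b : ℕ} (ha : 0 < a) (hb : 0 < b) :
    GoodMat (cfGen a * cfGen b) := by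
  have ha' : (1 : ℤ) ≤ a := by exact_mod_cast ha
  have hb' : (1 : ℤ) ≤ b := by exact_mod_cast hb
  simp only [cfGen, GoodMat, Matrix.mul_apply, Fin.sum_univ_two]
  norm_num
  refine ⟨?_, ?_, ?_, ?_⟩ <;> push_cast <;> nlinarith

lemma good_mul {M N : Matrix (Fin 2) (Fin 2) ℤ} (hM : GoodMat M) (hN : GoodMat N) :
    GoodMat (M * N) := by
  obtain ⟨h1, h2, h3, h4, h5⟩ := hM
  obtain ⟨g1, g2, g3, g4, g5⟩ := hN
  simp only [GoodMat, Matrix.mul_apply, Fin.sum_univ_two]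
  refine ⟨?_, ?_, ?_, ?_, ?_⟩ <;> nlinarith

lemma good_prod (l : List (ℕ × ℕ)) (hl : l ≠ []) (hmem : ∀ p ∈ l, 0 < p.1 ∧ 0 < p.2) :
    GoodMat (l.map (fun p => cfGen p.1 * cfGen p.2)).prod := by
  induction l with
  | nil => exact absurd rfl hl
  | cons p t ih =>
    have hp := hmem p (List.mem_cons_self (a := p) (l := t))
    rcases eq_or_ne t [] with rfl | ht
    · simpa using good_gen hp.1 hp.2
    · have := ih ht (fun q hq => hmem q (List.mem_cons_of_mem _ hq))
      simpa using good_mul (good_gen hp.1 hp.2) this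

/-- Every nonidentity `γ = [[a,b],[c,d]] ∈ Γ_A` satisfies
`1 ≤ a ≤ min(b,c) ≤ max(b,c) < d`. -/
theorem entries_of_gamma_semigroup (A : Set ℕ) (hA : ∀ a ∈ A, 0 < a)
    (γ : Matrix (Fin 2) (Fin 2) ℤ) (hγ : γ ∈ GammaSemigroup A) (hne : γ ≠ 1) :
    1 ≤ γ 0 0 ∧ γ 0 0 ≤ min (γ 0 1) (γ 1 0) ∧
      min (γ 0 1) (γ 1 0) ≤ max (γ 0 1) (γ 1 0) ∧
      max (γ 0 1) (γ 1 0) < γ 1 1 := by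
  obtain ⟨l, hl, hmem, rfl⟩ := hγ
  have h := good_prod l hl (fun p hp => ⟨hA _ (hmem p hp).1, hA _ (hmem p hp).2⟩)
  obtain ⟨h1, h2, h3, h4, h5⟩ := h
  exact ⟨h1, le_min h2 h3, min_le_max, max_lt h4 h5⟩
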